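/- For every α, β ∈ (0,1) with α + β < 1 there exists a function f₀ ∈ C(G_m²) such that ω(f₀,1/M_n)_C = O((1/M_n)^{α+β}) as n → ∞, and nevertheless lim sup_{n→∞} ‖σ_{M_n,M_n}^{−α,−β}(f₀) − f₀‖₁ > 0. -/

import Mathlib

open MeasureTheory Filter Finset
open scoped ENNReal NNReal Real

noncomputable section

namespace Vilenkin

/-- The bounded Vilenkin group: complete direct product of the cyclic groups `ZMod (m k)`. -/
abbrev G (m : ℕ → ℕ) : Type := ∀ k, ZMod (m k)

/-- The generalized number system `M 0 = 1`, `M (k+1) = m k * M k`. -/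
def M (m : ℕ → ℕ) : ℕ → ℕ
  | 0 => 1
  | k + 1 => m k * M m k

/-- The cylinder neighbourhood `I n = {x | x 0 = ⋯ = x (n-1) = 0}`. -/
def I (m : ℕ → ℕ) (n : ℕ) : Set (G m) := {x | ∀ j < n, x j = 0}

/-- The `j`-th digit of `n` in the generalized number system based on `m`. -/
def digit (m : ℕ → ℕ) (n j : ℕ) : ℕ := n / M m j % m j

/-- The generalized Rademacher functions `r k x = exp (2 π i x_k / m_k)`. -/
def rad (m : ℕ → ℕ) (k : ℕ) (x : G m) : ℂ :=
  Complex.exp (2 * Real.pi * Complex.I * ((x k).val : ℂ) / (m k : ℂ))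

/-- The Vilenkin system `ψ n = ∏ k, (r k) ^ (n_k)`. -/
def psi (m : ℕ → ℕ) (n : ℕ) (x : G m) : ℂ :=
  ∏ k ∈ Finset.range (n + 1), rad m k x ^ digit m n k

/-- The Vilenkin-Dirichlet kernels `D n = ∑_{k<n} ψ k`. -/
def D (m : ℕ → ℕ) (n : ℕ) (x : G m) : ℂ := ∑ k ∈ Finset.range n, psi m k x

/-- The Cesàro numbers `A n α = (α+1)⋯(α+n)/n!`. -/
def A (α : ℝ) (n : ℕ) : ℝ := (∏ i ∈ Finset.range n, (α + (i + 1))) / (n.factorial : ℝ)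

/-- One-dimensional Vilenkin-Fourier coefficients. -/
def fhat1 (m : ℕ → ℕ) (μ : Measure (G m)) (f : G m → ℂ) (i : ℕ) : ℂ :=
  ∫ x, f x * (starRingEnd ℂ) (psi m i x) ∂μ

/-- One-dimensional `(C,-α)` Cesàro means of the Vilenkin-Fourier series. -/
def cesaro1 (m : ℕ → ℕ) (μ : Measure (G m)) (α : ℝ) (f : G m → ℂ) (n : ℕ) (x : G m) : ℂ :=
  ((A (-α) n : ℝ) : ℂ)⁻¹ *
    ∑ i ∈ Finset.range (n + 1), ((A (-α) (n - i) : ℝ) : ℂ) * fhat1 m μ f i * psi m i x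

/-- Double Vilenkin-Fourier coefficients. -/
def fhat2 (m : ℕ → ℕ) (μ : Measure (G m)) (f : G m × G m → ℂ) (i j : ℕ) : ℂ :=
  ∫ z, f z * (starRingEnd ℂ) (psi m i z.1) * (starRingEnd ℂ) (psi m j z.2) ∂(μ.prod μ)

/-- Rectangular partial sums of the double Vilenkin-Fourier series. -/
def partialSum2 (m : ℕ → ℕ) (μ : Measure (G m)) (f : G m × G m → ℂ) (n₁ n₂ : ℕ)
    (z : G m × G m) : ℂ :=
  ∑ k₁ ∈ Finset.range n₁, ∑ k₂ ∈ Finset.range n₂,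
    fhat2 m μ f k₁ k₂ * psi m k₁ z.1 * psi m k₂ z.2

/-- The `(C,-α,-β)` means of the double Vilenkin-Fourier series. -/
def cesaro2 (m : ℕ → ℕ) (μ : Measure (G m)) (α β : ℝ) (f : G m × G m → ℂ) (n₁ n₂ : ℕ)
    (z : G m × G m) : ℂ :=
  ((A (-α) n₁ * A (-β) n₂ : ℝ) : ℂ)⁻¹ *
    ∑ i ∈ Finset.range (n₁ + 1), ∑ j ∈ Finset.range (n₂ + 1),
      ((A (-α) (n₁ - i) * A (-β) (n₂ - j) : ℝ) : ℂ) * fhat2 m μ f i j * psi m i z.1 * psi m j z.2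

/-- One-dimensional modulus of continuity in `L^p`. -/
def omegaOne (m : ℕ → ℕ) (μ : Measure (G m)) (p : ℝ≥0∞) (f : G m → ℂ) (n : ℕ) : ℝ≥0∞ :=
  ⨆ u ∈ I m n, eLpNorm (fun x => f (x - u) - f x) p μ

/-- First partial modulus of continuity in `L^p`. -/
def omega1 (m : ℕ → ℕ) (μ : Measure (G m)) (p : ℝ≥0∞) (f : G m × G m → ℂ) (n : ℕ) : ℝ≥0∞ :=
  ⨆ u ∈ I m n, eLpNorm (fun z => f (z.1 - u, z.2) - f z) p (μ.prod μ)

/-- Second partial modulus of continuity in `L^p`. -/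
def omega2 (m : ℕ → ℕ) (μ : Measure (G m)) (p : ℝ≥0∞) (f : G m × G m → ℂ) (n : ℕ) : ℝ≥0∞ :=
  ⨆ v ∈ I m n, eLpNorm (fun z => f (z.1, z.2 - v) - f z) p (μ.prod μ)

/-- Mixed modulus of continuity in `L^p`. -/
def omega12 (m : ℕ → ℕ) (μ : Measure (G m)) (p : ℝ≥0∞) (f : G m × G m → ℂ) (n l : ℕ) : ℝ≥0∞ :=
  ⨆ u ∈ I m n, ⨆ v ∈ I m l,
    eLpNorm (fun z => f (z.1 - u, z.2 - v) - f (z.1 - u, z.2) - f (z.1, z.2 - v) + f z) p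
      (μ.prod μ)

/-- Total modulus of continuity in `L^p`. -/
def omegaT (m : ℕ → ℕ) (μ : Measure (G m)) (p : ℝ≥0∞) (f : G m × G m → ℂ) (n : ℕ) : ℝ≥0∞ :=
  ⨆ u ∈ I m n, ⨆ v ∈ I m n, eLpNorm (fun z => f (z.1 - u, z.2 - v) - f z) p (μ.prod μ)

/-- Total modulus of continuity in the uniform norm. -/
def omegaC (m : ℕ → ℕ) (f : G m × G m → ℂ) (n : ℕ) : ℝ≥0∞ :=
  ⨆ u ∈ I m n, ⨆ v ∈ I m n, ⨆ z : G m × G m, (‖f (z.1 - u, z.2 - v) - f z‖₊ : ℝ≥0∞)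



variable {m : ℕ → ℕ} (hm2 : ∀ k, 2 ≤ m k)

lemma M_succ (k : ℕ) : M m (k + 1) = m k * M m k := rfl

include hm2

lemma two_pow_le_M (n : ℕ) : 2 ^ n ≤ M m n := by
  induction n with
  | zero => simp [M]
  | succ k ih =>
    rw [M_succ, pow_succ, mul_comm]
    exact Nat.mul_le_mul (hm2 k) ih

lemma M_pos (n : ℕ) : 0 < M m n := lt_of_lt_of_le (Nat.pow_pos (n := n) (by norm_num : 0 < 2)) (two_pow_le_M hm2 n)

lemma M_strictMono : StrictMono (M m) := by
  apply strictMono_nat_of_lt_succ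
  intro n
  rw [M_succ]
  calc M m n = 1 * M m n := (one_mul _).symm
  _ < m n * M m n := by
      exact (Nat.mul_lt_mul_right (M_pos hm2 n)).mpr (by have := hm2 n; omega)

lemma M_dvd {k K : ℕ} (h : k ≤ K) : M m k ∣ M m K := by
  induction K with
  | zero => simpa using (Nat.le_zero.mp h) ▸ dvd_refl _
  | succ K ih =>
    rcases Nat.le_succ_iff.mp h with h' | h'
    · exact (ih h').mul_left _
    · exact h' ▸ dvd_refl _

lemma M_eq_prod (K : ℕ) : M m K = ∏ k ∈ range K, m k := by
  induction K with
  | zero => simp [M]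
  | succ K ih => rw [M_succ, prod_range_succ, ih, mul_comm]

lemma digit_lt (n k : ℕ) : digit m n k < m k := Nat.mod_lt _ (by have := hm2 k; omega)

lemma digit_eq (n k : ℕ) : digit m n k = n % M m (k+1) / M m k := by
  rw [digit, M_succ, mul_comm, Nat.mod_mul_right_div_self]

lemma digit_of_lt {n k : ℕ} (h : n < M m k) : digit m n k = 0 := by
  rw [digit, Nat.div_eq_of_lt h, Nat.zero_mod]

lemma digit_of_lt_index {n k : ℕ} (h : n < k) : digit m n k = 0 := by
  refine digit_of_lt hm2 (lt_of_lt_of_le ?_ (two_pow_le_M hm2 k))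
  calc n < 2 ^ n := Nat.lt_two_pow_self (n := n)
  _ ≤ 2 ^ k := Nat.pow_le_pow_right (by norm_num) h.le

lemma digit_mod {n k K : ℕ} (h : k < K) : digit m (n % M m K) k = digit m n k := by
  rw [digit_eq hm2, digit_eq hm2, Nat.mod_mod_of_dvd _ (M_dvd hm2 h)]

lemma expansion {n K : ℕ} (h : n < M m K) : ∑ k ∈ range K, digit m n k * M m k = n := by
  induction K generalizing n with
  | zero => simp [M] at h; simp [h]
  | succ K ih =>
    rw [Finset.sum_range_succ]
    have h1 : ∀ k ∈ range K, digit m n k * M m k = digit m (n % M m K) k * M m k := by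
      intro k hk
      rw [digit_mod hm2 (mem_range.mp hk)]
    rw [Finset.sum_congr rfl h1, ih (Nat.mod_lt _ (M_pos hm2 K))]
    have h2 : digit m n K = n / M m K := by
      rw [digit, Nat.mod_eq_of_lt]
      rw [M_succ] at h
      exact Nat.div_lt_of_lt_mul (mul_comm (m K) (M m K) ▸ h)
    rw [h2, Nat.mod_add_div' n (M m K)]

lemma digit_inj {i j K : ℕ} (hi : i < M m K) (hj : j < M m K)
    (h : ∀ k < K, digit m i k = digit m j k) : i = j := by
  rw [← expansion hm2 hi, ← expansion hm2 hj]
  exact Finset.sum_congr rfl fun k hk => by rw [h k (mem_range.mp hk)]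



omit hm2 in
lemma rad_eq (k : ℕ) (x : G m) :
    rad m k x = Complex.exp (((2 * Real.pi * ((x k).val : ℝ) / (m k : ℝ) : ℝ) : ℂ) * Complex.I) := by
  rw [rad]
  congr 1
  push_cast
  ring

omit hm2 in
lemma norm_rad (k : ℕ) (x : G m) : ‖rad m k x‖ = 1 := by
  rw [rad_eq, Complex.norm_exp_ofReal_mul_I]

lemma psi_eq_prod {n K : ℕ} (h : n < K) (x : G m) :
    psi m n x = ∏ k ∈ range K, rad m k x ^ digit m n k := by
  rw [psi]
  apply Finset.prod_subset (Finset.range_subset_range.mpr h)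
  intro k _ hk
  rw [digit_of_lt_index hm2 (by simp at hk ⊢; omega), pow_zero]

lemma norm_psi (n : ℕ) (x : G m) : ‖psi m n x‖ = 1 := by
  rw [psi]
  rw [norm_prod]
  apply Finset.prod_eq_one
  intro k _
  rw [norm_pow, norm_rad, one_pow]

lemma psi_M_eq_rad (j : ℕ) (x : G m) : psi m (M m j) x = rad m j x := by
  have hj : j < M m j + 1 := Nat.lt_succ_of_le (le_trans (Nat.lt_two_pow_self (n := j)).le (two_pow_le_M hm2 j))
  rw [psi]
  rw [Finset.prod_eq_single j]
  · have : digit m (M m j) j = 1 := by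
      rw [digit, Nat.div_self (M_pos hm2 j), Nat.mod_eq_of_lt (by have := hm2 j; omega)]
    rw [this, pow_one]
  · intro k _ hkj
    rcases lt_or_gt_of_ne hkj with h | h
    · have : digit m (M m j) k = 0 := by
        rw [digit_eq hm2]
        have hz : M m j % M m (k+1) = 0 :=
          Nat.mod_eq_zero_of_dvd (M_dvd hm2 h)
        rw [hz, Nat.zero_div]
      rw [this, pow_zero]
    · have : digit m (M m j) k = 0 :=
        digit_of_lt hm2 (M_strictMono hm2 h)
      rw [this, pow_zero]
  · intro h
    exact absurd (Finset.mem_range.mpr hj) h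


omit hm2 in
lemma zmod_sum (q : ℕ) [NeZero q] (f : ℕ → ℂ) : ∑ t : ZMod q, f t.val = ∑ v ∈ range q, f v := by
  apply Finset.sum_nbij' (i := fun (t : ZMod q) => t.val) (j := fun (v : ℕ) => (v : ZMod q))
  · intro a _; exact Finset.mem_range.mpr (ZMod.val_lt a)
  · intro a _; exact Finset.mem_univ _
  · intro a _; exact ZMod.natCast_rightInverse a
  · intro a ha; exact ZMod.val_cast_of_lt (Finset.mem_range.mp ha)
  · intro a _; rfl

omit hm2 in
lemma geom_zmod (q : ℕ) [NeZero q] (hq : 2 ≤ q) (c : ℤ) (hc : c.natAbs < q) :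
    ∑ t : ZMod q, Complex.exp ((c : ℂ) * (2 * Real.pi * Complex.I * (t.val : ℂ) / (q : ℂ)))
      = if c = 0 then (q : ℂ) else 0 := by
  rw [zmod_sum q (fun v => Complex.exp ((c : ℂ) * (2 * Real.pi * Complex.I * (v : ℂ) / (q : ℂ))))]
  by_cases h : c = 0
  · simp [h]
  · rw [if_neg h]
    have hq0 : (q : ℂ) ≠ 0 := Nat.cast_ne_zero.mpr (by omega)
    have h2pi : (2 * (Real.pi : ℂ) * Complex.I) ≠ 0 := by
      simp [Real.pi_ne_zero, Complex.I_ne_zero]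
    set ζ := Complex.exp ((c : ℂ) * (2 * Real.pi * Complex.I) / q) with hζ
    have hterm : ∀ v : ℕ, Complex.exp ((c : ℂ) * (2 * Real.pi * Complex.I * (v : ℂ) / (q : ℂ))) = ζ ^ v := by
      intro v
      rw [hζ, ← Complex.exp_nat_mul]
      congr 1
      field_simp
    rw [Finset.sum_congr rfl fun v _ => hterm v]
    have hζq : ζ ^ q = 1 := by
      rw [hζ, ← Complex.exp_nat_mul]
      have he : (q : ℂ) * ((c : ℂ) * (2 * Real.pi * Complex.I) / q) = (c : ℂ) * (2 * Real.pi * Complex.I) := by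
        field_simp
      rw [he, Complex.exp_int_mul_two_pi_mul_I]
    have hζ1 : ζ ≠ 1 := by
      intro h1
      obtain ⟨n, hn⟩ := Complex.exp_eq_one_iff.mp h1
      have hn' : (c : ℂ) * (2 * Real.pi * Complex.I) = ((n : ℂ) * q) * (2 * Real.pi * Complex.I) := by
        rw [div_eq_iff hq0] at hn
        linear_combination hn
      have h5 : (c : ℂ) = (n : ℂ) * q := mul_right_cancel₀ h2pi hn'
      have h6 : c = n * q := by exact_mod_cast h5
      have hdvd : (q : ℤ) ∣ c := ⟨n, by rw [h6]; ring⟩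
      have habs : |c| < (q : ℤ) := by
        rw [Int.abs_eq_natAbs]
        exact_mod_cast hc
      exact h (Int.eq_zero_of_abs_lt_dvd hdvd habs)
    rw [geom_sum_eq hζ1, hζq]
    simp

lemma conj_rad (k : ℕ) (x : G m) :
    (starRingEnd ℂ) (rad m k x) =
      Complex.exp (-(((2 * Real.pi * ((x k).val : ℝ) / (m k : ℝ) : ℝ) : ℂ) * Complex.I)) := by
  rw [rad_eq, ← Complex.exp_conj]
  congr 1
  rw [map_mul, Complex.conj_ofReal, Complex.conj_I]
  ring

lemma psi_mul_conj {i j K : ℕ} (hi : i < K) (hj : j < K) (x : G m) :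
    psi m i x * (starRingEnd ℂ) (psi m j x) =
    ∏ k ∈ range K, Complex.exp ((((digit m i k : ℤ) - (digit m j k : ℤ) : ℤ) : ℂ) *
      (2 * Real.pi * Complex.I * ((x k).val : ℂ) / (m k : ℂ))) := by
  rw [psi_eq_prod hm2 hi, psi_eq_prod hm2 hj, map_prod, ← Finset.prod_mul_distrib]
  apply Finset.prod_congr rfl
  intro k _
  rw [map_pow, rad_eq, ← Complex.exp_conj, ← Complex.exp_nat_mul, ← Complex.exp_nat_mul,
    ← Complex.exp_add]
  congr 1
  rw [map_mul, Complex.conj_ofReal, Complex.conj_I]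
  push_cast
  ring


section Meas
variable [∀ k, NeZero (m k)]

/-- extend a finite tuple by zeros -/
def extend (m : ℕ → ℕ) (K : ℕ) (w : ∀ k : Fin K, ZMod (m k)) : G m :=
  fun j => if h : j < K then w ⟨j, h⟩ else 0

omit hm2 in
lemma measurableSet_cyl (K : ℕ) (w : ∀ k : Fin K, ZMod (m k)) :
    MeasurableSet {y : G m | ∀ k : Fin K, y k = w k} := by
  have : {y : G m | ∀ k : Fin K, y k = w k} = ⋂ k : Fin K, (fun y : G m => y k) ⁻¹' {w k} := by
    ext y; simp [Set.mem_iInter]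
  rw [this]
  exact MeasurableSet.iInter fun k => (measurable_pi_apply _) (measurableSet_singleton _)

variable (μ : Measure (G m)) [IsProbabilityMeasure μ]
  (hμ : ∀ (n : ℕ) (x : G m), μ {y : G m | ∀ j < n, y j = x j} = (M m n : ℝ≥0∞)⁻¹)

omit hm2 in
include hμ in
lemma measure_cyl (K : ℕ) (w : ∀ k : Fin K, ZMod (m k)) :
    μ {y : G m | ∀ k : Fin K, y k = w k} = (M m K : ℝ≥0∞)⁻¹ := by
  have h := hμ K (extend m K w)
  have hset : {y : G m | ∀ j < K, y j = extend m K w j} = {y : G m | ∀ k : Fin K, y k = w k} := by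
    ext y
    constructor
    · intro hy k
      simpa [extend] using hy k.1 k.2
    · intro hy j hj
      rw [extend, dif_pos hj]
      exact hy ⟨j, hj⟩
  rwa [hset] at h

omit hm2 in
include hμ in
lemma repr_local {K : ℕ} {g : G m → ℂ} (hg : ∀ x y : G m, (∀ j < K, x j = y j) → g x = g y) :
    g = fun x => ∑ w : (∀ k : Fin K, ZMod (m k)),
      Set.indicator {y : G m | ∀ k : Fin K, y k = w k} (fun _ => g (extend m K w)) x := by
  funext x
  rw [Finset.sum_eq_single (fun k : Fin K => x k)]
  · rw [Set.indicator_of_mem (by simp)]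
    apply hg
    intro j hj
    rw [extend, dif_pos hj]
  · intro w _ hw
    rw [Set.indicator_of_notMem]
    intro hx
    exact hw (funext fun k => (hx k).symm)
  · intro h
    exact absurd (Finset.mem_univ _) h

omit hm2 in
include hμ in
lemma integrable_local {K : ℕ} {g : G m → ℂ} (hg : ∀ x y : G m, (∀ j < K, x j = y j) → g x = g y) :
    Integrable g μ := by
  rw [repr_local μ hμ hg]
  apply integrable_finset_sum
  intro w _
  exact (integrable_const _).indicator (measurableSet_cyl K w)

omit hm2 in
include hμ in
lemma integral_local {K : ℕ} {g : G m → ℂ} (hg : ∀ x y : G m, (∀ j < K, x j = y j) → g x = g y) :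
    ∫ x, g x ∂μ = ((M m K : ℝ))⁻¹ • ∑ w : (∀ k : Fin K, ZMod (m k)), g (extend m K w) := by
  conv_lhs => rw [repr_local μ hμ hg]
  rw [integral_finset_sum _ (fun w _ => (integrable_const _).indicator (measurableSet_cyl K w))]
  rw [Finset.smul_sum]
  apply Finset.sum_congr rfl
  intro w _
  rw [integral_indicator_const _ (measurableSet_cyl K w), measureReal_def, measure_cyl μ hμ]
  congr 1
  simp



include hμ in
lemma orth (i j : ℕ) :
    ∫ x, psi m i x * (starRingEnd ℂ) (psi m j x) ∂μ = if i = j then 1 else 0 := by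
  classical
  set K := max i j + 1 with hK
  have hiK : i < K := lt_of_le_of_lt (le_max_left i j) (Nat.lt_succ_self _)
  have hjK : j < K := lt_of_le_of_lt (le_max_right i j) (Nat.lt_succ_self _)
  set F : ∀ k : ℕ, ZMod (m k) → ℂ := fun k t =>
    Complex.exp ((((digit m i k : ℤ) - (digit m j k : ℤ) : ℤ) : ℂ) *
      (2 * Real.pi * Complex.I * ((t.val : ℕ) : ℂ) / (m k : ℂ))) with hF
  have hloc : ∀ x y : G m, (∀ l < K, x l = y l) →
      (fun x : G m => ∏ k ∈ range K, F k (x k)) x = (fun x : G m => ∏ k ∈ range K, F k (x k)) y := by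
    intro x y h
    exact Finset.prod_congr rfl fun k hk => by rw [h k (Finset.mem_range.mp hk)]
  have key : ∫ x, psi m i x * (starRingEnd ℂ) (psi m j x) ∂μ
      = ∫ x, ∏ k ∈ range K, F k (x k) ∂μ :=
    integral_congr_ae (Filter.Eventually.of_forall fun x => psi_mul_conj hm2 hiK hjK x)
  rw [key, integral_local μ hμ hloc]
  have e1 : ∀ w : (∀ k : Fin K, ZMod (m k)), ∏ k ∈ range K, F k (extend m K w k)
      = ∏ k0 : Fin K, F k0.1 (w k0) := by
    intro w
    rw [← Fin.prod_univ_eq_prod_range (fun k => F k (extend m K w k)) K]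
    apply Fintype.prod_congr
    intro k0
    congr 1
    simp [extend]
  rw [Finset.sum_congr rfl (fun w _ => e1 w)]
  have e2 : ∑ w ∈ (Finset.univ : Finset (∀ k : Fin K, ZMod (m k))), ∏ k0 : Fin K, F k0.1 (w k0)
      = ∏ k0 : Fin K, ∑ t : ZMod (m k0.1), F k0.1 t := by
    rw [← Fintype.piFinset_univ, Finset.prod_univ_sum]
  rw [e2]
  have e3 : ∀ k0 : Fin K, ∑ t : ZMod (m k0.1), F k0.1 t
      = if digit m i k0.1 = digit m j k0.1 then ((m k0.1 : ℕ) : ℂ) else 0 := by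
    intro k0
    have hgeo := geom_zmod (m k0.1) (hm2 k0.1) ((digit m i k0.1 : ℤ) - (digit m j k0.1 : ℤ))
      (by
        have h1 := digit_lt hm2 i k0.1
        have h2 := digit_lt hm2 j k0.1
        omega)
    rw [hF]
    rw [hgeo]
    have hcond : ((digit m i k0.1 : ℤ) - (digit m j k0.1 : ℤ) = 0)
        ↔ (digit m i k0.1 = digit m j k0.1) := by omega
    rw [if_congr hcond rfl rfl]
  rw [Fintype.prod_congr _ _ e3]
  by_cases hij : i = j
  · rw [if_pos hij]
    subst hij
    have h4 : ∏ k0 : Fin K, (if digit m i k0.1 = digit m i k0.1 then ((m k0.1 : ℕ) : ℂ) else 0)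
        = ∏ k0 : Fin K, ((m k0.1 : ℕ) : ℂ) :=
      Finset.prod_congr rfl fun k0 _ => if_pos rfl
    have h5 : ∏ k0 : Fin K, ((m k0.1 : ℕ) : ℂ) = ((M m K : ℕ) : ℂ) := by
      rw [Fin.prod_univ_eq_prod_range (fun k => ((m k : ℕ) : ℂ)) K, M_eq_prod hm2]
      push_cast
      rfl
    rw [h4, h5]
    have hMne : ((M m K : ℕ) : ℝ) ≠ 0 := Nat.cast_ne_zero.mpr (M_pos hm2 K).ne'
    rw [Complex.real_smul]
    rw [← Complex.ofReal_natCast, ← Complex.ofReal_mul,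
      inv_mul_cancel₀ hMne, Complex.ofReal_one]
  · rw [if_neg hij]
    have hex : ∃ k0 : Fin K, digit m i k0.1 ≠ digit m j k0.1 := by
      by_contra hall
      push_neg at hall
      apply hij
      have hiM : i < M m K := lt_of_lt_of_le hiK (le_trans (Nat.lt_two_pow_self (n := K)).le (two_pow_le_M hm2 K))
      have hjM : j < M m K := lt_of_lt_of_le hjK (le_trans (Nat.lt_two_pow_self (n := K)).le (two_pow_le_M hm2 K))
      exact digit_inj hm2 hiM hjM (fun k hk => hall ⟨k, hk⟩)
    obtain ⟨k0, hk0⟩ := hex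
    have h0 : (if digit m i k0.1 = digit m j k0.1 then ((m k0.1 : ℕ) : ℂ) else 0) = 0 := if_neg hk0
    rw [Finset.prod_eq_zero (Finset.mem_univ k0) h0, smul_zero]

include hμ in
lemma orth_rad (n i : ℕ) :
    ∫ x, rad m n x * (starRingEnd ℂ) (psi m i x) ∂μ = if M m n = i then 1 else 0 := by
  simp only [← psi_M_eq_rad hm2]
  exact orth hm2 μ hμ (M m n) i

end Meas


omit hm2

lemma A_zero (γ : ℝ) : A γ 0 = 1 := by simp [A]

lemma A_eq_prod (α : ℝ) (n : ℕ) : A (-α) n = ∏ i ∈ range n, (1 - α / (i + 1)) := by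
  rw [A, ← Finset.prod_range_add_one_eq_factorial]
  push_cast
  rw [← Finset.prod_div_distrib]
  apply Finset.prod_congr rfl
  intro i _
  have h : ((i : ℝ) + 1) ≠ 0 := by positivity
  field_simp
  ring

lemma A_pos {α : ℝ} (h1 : α < 1) (n : ℕ) : 0 < A (-α) n := by
  rw [A_eq_prod]
  apply Finset.prod_pos
  intro i _
  have h : α / ((i : ℝ) + 1) < 1 := by
    rw [div_lt_one (by positivity)]
    nlinarith [Nat.cast_nonneg (α := ℝ) i]
  linarith

lemma prod_telescope (n : ℕ) : ∏ i ∈ range n, ((i + 1 : ℝ) / (i + 2)) = ((n : ℝ) + 1)⁻¹ := by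
  induction n with
  | zero => simp
  | succ n ih =>
    rw [Finset.prod_range_succ, ih]
    have h1 : ((n : ℝ) + 1) ≠ 0 := by positivity
    have h2 : ((n : ℝ) + 2) ≠ 0 := by positivity
    field_simp
    push_cast
    ring

lemma A_le {α : ℝ} (h0 : 0 < α) (h1 : α < 1) {n : ℕ} (hn : 1 ≤ n) :
    A (-α) n ≤ ((n : ℝ))⁻¹ ^ α := by
  rw [A_eq_prod]
  have step : ∀ i : ℕ, (1 - α / ((i : ℝ) + 1)) ≤ (((i : ℝ) + 1) / ((i : ℝ) + 2)) ^ α := by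
    intro i
    set s : ℝ := ((i : ℝ) + 1)⁻¹ with hs
    have hs0 : 0 < s := by positivity
    have hs1 : s ≤ 1 := by
      rw [hs]
      rw [inv_le_one_iff₀]
      right; linarith [Nat.cast_nonneg (α := ℝ) i]
    have hB : (1 + s) ^ α ≤ 1 + α * s :=
      rpow_one_add_le_one_add_mul_self (by linarith) h0.le h1.le
    have hBpos : (0 : ℝ) < (1 + s) ^ α := Real.rpow_pos_of_pos (by linarith) α
    have hfrac : ((i : ℝ) + 1) / ((i : ℝ) + 2) = (1 + s)⁻¹ := by
      have h2 : (1 : ℝ) + s = ((i : ℝ) + 2) / ((i : ℝ) + 1) := by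
        rw [hs]
        field_simp
        ring
      rw [h2, inv_div]
    rw [hfrac, Real.inv_rpow (by linarith)]
    have h3 : (1 + α * s)⁻¹ ≤ ((1 + s) ^ α)⁻¹ := by
      apply inv_anti₀ hBpos hB
    have h4 : 1 - α / ((i : ℝ) + 1) ≤ (1 + α * s)⁻¹ := by
      have hαs : 0 < 1 + α * s := by positivity
      rw [inv_eq_one_div, le_div_iff₀ hαs]
      have : α / ((i : ℝ) + 1) = α * s := by rw [hs]; ring
      rw [this]
      nlinarith [sq_nonneg (α * s)]
    calc 1 - α / ((i : ℝ) + 1) ≤ (1 + α * s)⁻¹ := h4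
    _ ≤ ((1 + s) ^ α)⁻¹ := h3
  have hnonneg : ∀ i ∈ range n, (0 : ℝ) ≤ 1 - α / ((i : ℝ) + 1) := by
    intro i _
    have : α / ((i : ℝ) + 1) ≤ α := by
      rw [div_le_iff₀ (by positivity)]
      nlinarith [Nat.cast_nonneg (α := ℝ) i]
    linarith
  calc ∏ i ∈ range n, (1 - α / ((i : ℝ) + 1))
      ≤ ∏ i ∈ range n, (((i : ℝ) + 1) / ((i : ℝ) + 2)) ^ α :=
        Finset.prod_le_prod hnonneg (fun i _ => step i)
  _ = (∏ i ∈ range n, (((i : ℝ) + 1) / ((i : ℝ) + 2))) ^ α :=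
        Real.finset_prod_rpow _ _ (fun i _ => by positivity) α
  _ = (((n : ℝ) + 1)⁻¹) ^ α := by rw [prod_telescope]
  _ ≤ ((n : ℝ))⁻¹ ^ α := by
      apply Real.rpow_le_rpow (by positivity) _ h0.le
      have hn' : (1 : ℝ) ≤ (n : ℝ) := by exact_mod_cast hn
      rw [inv_le_inv₀ (by linarith) (by linarith)]
      linarith


/-- the coefficient sequence -/
def aseq (m : ℕ → ℕ) (p : ℝ) (j : ℕ) : ℝ := ((M m j : ℝ))⁻¹ ^ p

/-- the counterexample function -/
def f0 (m : ℕ → ℕ) (p : ℝ) (z : G m × G m) : ℂ :=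
  ∑' j : ℕ, ((aseq m p j : ℝ) : ℂ) * (rad m j z.1 * rad m j z.2)

section F0

variable {p : ℝ} (hp : 0 < p)

include hm2

lemma aseq_pos (p : ℝ) (j : ℕ) : 0 < aseq m p j := by
  rw [aseq]
  apply Real.rpow_pos_of_pos
  have := M_pos (m := m) hm2 j
  positivity

include hp in
lemma aseq_le_geom (j : ℕ) : aseq m p j ≤ ((2 : ℝ) ^ (-p)) ^ j := by
  have h1 : ((2 : ℝ) ^ j)⁻¹ ≤ ((M m j : ℝ))⁻¹ → False ∨ True := fun _ => Or.inr trivial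
  have hM : ((2 : ℝ) ^ j) ≤ (M m j : ℝ) := by exact_mod_cast two_pow_le_M hm2 j
  have h2 : ((M m j : ℝ))⁻¹ ≤ ((2 : ℝ) ^ j)⁻¹ := by
    apply inv_anti₀ (by positivity) hM
  have h3 : aseq m p j ≤ (((2 : ℝ) ^ j)⁻¹) ^ p := by
    rw [aseq]
    apply Real.rpow_le_rpow (by positivity) h2 hp.le
  refine h3.trans (le_of_eq ?_)
  rw [← Real.rpow_natCast (2 : ℝ) j, ← Real.rpow_neg (by norm_num), ← Real.rpow_mul (by norm_num),
    ← Real.rpow_natCast ((2 : ℝ) ^ (-p)) j, ← Real.rpow_mul (by norm_num)]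
  ring_nf

include hp in
lemma summable_aseq : Summable (aseq m p) := by
  apply Summable.of_nonneg_of_le (fun j => (aseq_pos hm2 p j).le) (aseq_le_geom hm2 hp)
  apply summable_geometric_of_lt_one (by positivity)
  exact Real.rpow_lt_one_of_one_lt_of_neg (by norm_num) (by linarith)

include hp in
lemma aseq_shift_le (n i : ℕ) : aseq m p (n + i) ≤ aseq m p n * ((2 : ℝ) ^ (-p)) ^ i := by
  have hM : (2 : ℝ) ^ i * (M m n : ℝ) ≤ (M m (n + i) : ℝ) := by
    have : 2 ^ i * M m n ≤ M m (n + i) := by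
      induction i with
      | zero => simp
      | succ i ih =>
        have hstep : M m (n + (i + 1)) = m (n + i) * M m (n + i) := rfl
        rw [hstep]
        calc 2 ^ (i + 1) * M m n = 2 * (2 ^ i * M m n) := by ring
        _ ≤ 2 * M m (n + i) := by omega
        _ ≤ m (n + i) * M m (n + i) := Nat.mul_le_mul_right _ (hm2 (n + i))
    exact_mod_cast this
  have hMn := M_pos (m := m) hm2 n
  have hMni := M_pos (m := m) hm2 (n + i)
  have h2 : ((M m (n + i) : ℝ))⁻¹ ≤ ((2 : ℝ) ^ i * (M m n : ℝ))⁻¹ := by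
    apply inv_anti₀ (by positivity) hM
  have h3 : aseq m p (n + i) ≤ (((2 : ℝ) ^ i * (M m n : ℝ))⁻¹) ^ p := by
    rw [aseq]
    apply Real.rpow_le_rpow (by positivity) h2 hp.le
  refine h3.trans (le_of_eq ?_)
  rw [mul_inv]
  rw [Real.mul_rpow (by positivity) (by positivity)]
  rw [mul_comm]
  congr 1
  rw [← Real.rpow_natCast (2 : ℝ) i, ← Real.rpow_neg (by norm_num), ← Real.rpow_mul (by norm_num),
    ← Real.rpow_natCast ((2 : ℝ) ^ (-p)) i, ← Real.rpow_mul (by norm_num)]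
  ring_nf

include hp in
lemma tsum_aseq_tail_le (n : ℕ) :
    ∑' i : ℕ, aseq m p (n + i) ≤ aseq m p n * (1 - (2 : ℝ) ^ (-p))⁻¹ := by
  have hr0 : (0 : ℝ) < (2 : ℝ) ^ (-p) := by positivity
  have hr1 : (2 : ℝ) ^ (-p) < 1 :=
    Real.rpow_lt_one_of_one_lt_of_neg (by norm_num) (by linarith)
  have hsum : Summable (fun i => aseq m p n * ((2 : ℝ) ^ (-p)) ^ i) :=
    (summable_geometric_of_lt_one hr0.le hr1).mul_left _
  have hsum2 : Summable (fun i => aseq m p (n + i)) := by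
    apply Summable.of_nonneg_of_le (fun i => (aseq_pos hm2 p _).le) (aseq_shift_le hm2 hp n) hsum
  calc ∑' i : ℕ, aseq m p (n + i) ≤ ∑' i : ℕ, aseq m p n * ((2 : ℝ) ^ (-p)) ^ i :=
    Summable.tsum_le_tsum (aseq_shift_le hm2 hp n) hsum2 hsum
  _ = aseq m p n * (1 - (2 : ℝ) ^ (-p))⁻¹ := by
    rw [tsum_mul_left, tsum_geometric_of_lt_one hr0.le hr1]

variable [∀ k, NeZero (m k)]

omit hm2 in
lemma continuous_rad (k : ℕ) : Continuous (rad m k) := by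
  have h1 : Continuous fun x : G m => x k := continuous_apply k
  exact (continuous_of_discreteTopology
    (f := fun t : ZMod (m k) => Complex.exp (2 * Real.pi * Complex.I * ((t.val : ℕ) : ℂ) / (m k : ℂ)))).comp h1

omit hm2 in
lemma continuous_psi (n : ℕ) : Continuous (psi m n) := by
  apply continuous_finset_prod
  intro k _
  exact (continuous_rad k).pow _

omit hm2 in
lemma norm_f0_term (p : ℝ) (j : ℕ) (z : G m × G m) :
    ‖((aseq m p j : ℝ) : ℂ) * (rad m j z.1 * rad m j z.2)‖ = |aseq m p j| := by
  rw [norm_mul, norm_mul, norm_rad, norm_rad, Complex.norm_real]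
  simp [Real.norm_eq_abs]

include hp in
lemma summable_f0_norm (z : G m × G m) :
    Summable fun j => ‖((aseq m p j : ℝ) : ℂ) * (rad m j z.1 * rad m j z.2)‖ := by
  have h : (fun j => ‖((aseq m p j : ℝ) : ℂ) * (rad m j z.1 * rad m j z.2)‖)
      = fun j => aseq m p j :=
    funext fun j => by rw [norm_f0_term, abs_of_pos (aseq_pos hm2 p j)]
  rw [h]
  exact summable_aseq hm2 hp

include hp in
lemma continuous_f0 : Continuous (f0 m p) := by
  apply continuous_tsum
  · intro j
    apply Continuous.mul continuous_const
    exact ((continuous_rad j).comp continuous_fst).mul ((continuous_rad j).comp continuous_snd)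
  · exact summable_aseq hm2 hp
  · intro j z
    rw [norm_f0_term]
    rw [abs_of_pos (aseq_pos hm2 p j)]


omit hm2 in
lemma rad_sub_eq {j : ℕ} {x u : G m} (hu : u j = 0) : rad m j (x - u) = rad m j x := by
  rw [rad, rad]
  have h : (x - u) j = x j := by
    show x j - u j = x j
    rw [hu, sub_zero]
  rw [h]

include hp in
lemma f0_shift_bound (n : ℕ) (u v : G m) (hu : u ∈ I m n) (hv : v ∈ I m n) (z : G m × G m) :
    ‖f0 m p (z.1 - u, z.2 - v) - f0 m p z‖ ≤ 2 * (1 - (2 : ℝ) ^ (-p))⁻¹ * aseq m p n := by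
  have hr0 : (0 : ℝ) < (2 : ℝ) ^ (-p) := by positivity
  have hr1 : (2 : ℝ) ^ (-p) < 1 :=
    Real.rpow_lt_one_of_one_lt_of_neg (by norm_num) (by linarith)
  set w : G m × G m := (z.1 - u, z.2 - v) with hw
  set T : ℕ → ℂ := fun j =>
    ((aseq m p j : ℝ) : ℂ) * (rad m j w.1 * rad m j w.2)
      - ((aseq m p j : ℝ) : ℂ) * (rad m j z.1 * rad m j z.2) with hT
  have hsumw : Summable fun j => ((aseq m p j : ℝ) : ℂ) * (rad m j w.1 * rad m j w.2) :=
    Summable.of_norm (summable_f0_norm hm2 hp w)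
  have hsumz : Summable fun j => ((aseq m p j : ℝ) : ℂ) * (rad m j z.1 * rad m j z.2) :=
    Summable.of_norm (summable_f0_norm hm2 hp z)
  have hdiff : f0 m p w - f0 m p z = ∑' j, T j := by
    rw [f0, f0, ← Summable.tsum_sub hsumw hsumz]
  set b : ℕ → ℝ := fun j => if j < n then 0 else 2 * aseq m p j with hb
  have hTb : ∀ j, ‖T j‖ ≤ b j := by
    intro j
    by_cases hj : j < n
    · have h1 : rad m j w.1 = rad m j z.1 := rad_sub_eq (hu j hj)
      have h2 : rad m j w.2 = rad m j z.2 := rad_sub_eq (hv j hj)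
      rw [hb]
      simp only [hT, h1, h2, sub_self, norm_zero, if_pos hj]
      exact le_refl 0
    · rw [hb]
      simp only [if_neg hj]
      calc ‖T j‖ ≤ ‖((aseq m p j : ℝ) : ℂ) * (rad m j w.1 * rad m j w.2)‖
          + ‖((aseq m p j : ℝ) : ℂ) * (rad m j z.1 * rad m j z.2)‖ := norm_sub_le _ _
      _ = 2 * aseq m p j := by
          rw [norm_f0_term, norm_f0_term, abs_of_pos (aseq_pos hm2 p j)]
          ring
  have hsum_b : Summable b := by
    apply Summable.of_nonneg_of_le
      (fun j => by rw [hb]; dsimp only; split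
                   · exact le_refl 0
                   · have := aseq_pos hm2 p j; positivity)
      (fun j => by rw [hb]; dsimp only; split
                   · have := aseq_pos hm2 p j; positivity
                   · exact le_refl _)
      ((summable_aseq hm2 hp).mul_left 2)
  have hsum_T : Summable fun j => ‖T j‖ := Summable.of_nonneg_of_le (fun j => norm_nonneg _) hTb hsum_b
  have step1 : ‖f0 m p w - f0 m p z‖ ≤ ∑' j, ‖T j‖ := by
    rw [hdiff]
    exact norm_tsum_le_tsum_norm hsum_T
  have step2 : ∑' j, ‖T j‖ ≤ ∑' j, b j := Summable.tsum_le_tsum hTb hsum_T hsum_b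
  have step3 : ∑' j, b j ≤ 2 * (1 - (2 : ℝ) ^ (-p))⁻¹ * aseq m p n := by
    rw [← Summable.sum_add_tsum_nat_add n hsum_b]
    have hz : ∑ i ∈ range n, b i = 0 := by
      apply Finset.sum_eq_zero
      intro i hi
      rw [hb]
      exact if_pos (mem_range.mp hi)
    rw [hz, zero_add]
    have he : ∀ i : ℕ, b (i + n) = 2 * aseq m p (n + i) := by
      intro i
      rw [hb]
      dsimp only
      rw [if_neg (by omega), Nat.add_comm i n]
    rw [tsum_congr he]
    have : ∑' i : ℕ, 2 * aseq m p (n + i) = 2 * ∑' i : ℕ, aseq m p (n + i) := by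
      rw [← tsum_mul_left]
    rw [this]
    have := tsum_aseq_tail_le hm2 hp n
    calc 2 * ∑' i : ℕ, aseq m p (n + i) ≤ 2 * (aseq m p n * (1 - (2 : ℝ) ^ (-p))⁻¹) := by linarith
    _ = 2 * (1 - (2 : ℝ) ^ (-p))⁻¹ * aseq m p n := by ring
  calc ‖f0 m p w - f0 m p z‖ ≤ ∑' j, ‖T j‖ := step1
  _ ≤ ∑' j, b j := step2
  _ ≤ _ := step3

include hp in
lemma omegaC_f0_le (n : ℕ) :
    omegaC m (f0 m p) n ≤
      ENNReal.ofReal (2 * (1 - (2 : ℝ) ^ (-p))⁻¹) * ((M m n : ℝ≥0∞)⁻¹) ^ p := by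
  have hMpos : (0 : ℝ) < (M m n : ℝ) := by exact_mod_cast M_pos hm2 n
  have hofr : ENNReal.ofReal (aseq m p n) = ((M m n : ℝ≥0∞)⁻¹) ^ p := by
    rw [aseq, ← ENNReal.ofReal_rpow_of_pos (by positivity),
      ENNReal.ofReal_inv_of_pos hMpos, ENNReal.ofReal_natCast]
  have hr1 : (2 : ℝ) ^ (-p) < 1 :=
    Real.rpow_lt_one_of_one_lt_of_neg (by norm_num) (by linarith)
  rw [omegaC]
  refine iSup₂_le fun u hu => iSup₂_le fun v hv => iSup_le fun z => ?_
  have hbd := f0_shift_bound hm2 hp n u v hu hv z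
  calc (‖f0 m p (z.1 - u, z.2 - v) - f0 m p z‖₊ : ℝ≥0∞)
      = ENNReal.ofReal ‖f0 m p (z.1 - u, z.2 - v) - f0 m p z‖ :=
        (ofReal_norm _).symm
  _ ≤ ENNReal.ofReal (2 * (1 - (2 : ℝ) ^ (-p))⁻¹ * aseq m p n) := ENNReal.ofReal_le_ofReal hbd
  _ = ENNReal.ofReal (2 * (1 - (2 : ℝ) ^ (-p))⁻¹) * ((M m n : ℝ≥0∞)⁻¹) ^ p := by
      have hpos : (0 : ℝ) < 1 - 2 ^ (-p) := by linarith
      rw [ENNReal.ofReal_mul (by positivity), hofr]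

end F0

section Final

lemma cont_int {X : Type*} [TopologicalSpace X] [CompactSpace X] [MeasurableSpace X]
    [OpensMeasurableSpace X] (ν : Measure X) [IsFiniteMeasure ν] {g : X → ℂ}
    (hg : Continuous g) : Integrable g ν :=
  hg.integrable_of_hasCompactSupport (HasCompactSupport.of_compactSpace g)

variable [∀ k, NeZero (m k)] (μ : Measure (G m)) [IsProbabilityMeasure μ]
  (hμ : ∀ (n : ℕ) (x : G m), μ {y : G m | ∀ j < n, y j = x j} = (M m n : ℝ≥0∞)⁻¹)

omit hm2 in
lemma continuous_cesaro2 (α β : ℝ) (f : G m × G m → ℂ) (n₁ n₂ : ℕ) :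
    Continuous (cesaro2 m μ α β f n₁ n₂) := by
  unfold cesaro2
  apply Continuous.mul continuous_const
  apply continuous_finset_sum
  intro i _
  apply continuous_finset_sum
  intro j _
  exact (continuous_const.mul ((continuous_psi i).comp continuous_fst)).mul
    ((continuous_psi j).comp continuous_snd)

omit hm2 in
lemma continuous_conj_psi (n : ℕ) : Continuous fun x : G m => (starRingEnd ℂ) (psi m n x) :=
  Complex.continuous_conj.comp (continuous_psi n)

variable {p : ℝ} (hp : 0 < p)

include hm2 hp hμ in
lemma fhat2_f0 (n : ℕ) :
    fhat2 m μ (f0 m p) (M m n) (M m n) = ((aseq m p n : ℝ) : ℂ) := by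
  set N := M m n with hN
  set T : ℕ → G m × G m → ℂ := fun j z =>
    (((aseq m p j : ℝ) : ℂ) * (rad m j z.1 * (starRingEnd ℂ) (psi m N z.1))) *
      (rad m j z.2 * (starRingEnd ℂ) (psi m N z.2)) with hT
  have hnormT : ∀ j z, ‖T j z‖ = aseq m p j := by
    intro j z
    rw [hT]
    simp only [norm_mul, norm_rad, RCLike.norm_conj, norm_psi hm2, Complex.norm_real,
      Real.norm_eq_abs, abs_of_pos (aseq_pos hm2 p j)]
    ring
  have hrw : ∀ z : G m × G m,
      f0 m p z * (starRingEnd ℂ) (psi m N z.1) * (starRingEnd ℂ) (psi m N z.2)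
        = ∑' j, T j z := by
    intro z
    rw [f0, ← tsum_mul_right, ← tsum_mul_right]
    apply tsum_congr
    intro j
    rw [hT]
    ring
  have hmeas : ∀ j : ℕ, AEStronglyMeasurable (T j) (μ.prod μ) := by
    intro j
    apply Continuous.aestronglyMeasurable
    rw [hT]
    exact ((continuous_const.mul (((continuous_rad j).comp continuous_fst).mul
        ((continuous_conj_psi N).comp continuous_fst)))).mul
      (((continuous_rad j).comp continuous_snd).mul
        ((continuous_conj_psi N).comp continuous_snd))
  have hfin : ∑' j, ∫⁻ z, ‖T j z‖₊ ∂(μ.prod μ) ≠ ⊤ := by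
    have heq : ∀ j : ℕ, ∫⁻ z, (‖T j z‖₊ : ℝ≥0∞) ∂(μ.prod μ) = ENNReal.ofReal (aseq m p j) := by
      intro j
      have : ∀ z, (‖T j z‖₊ : ℝ≥0∞) = ENNReal.ofReal (aseq m p j) := fun z => by
        rw [← enorm_eq_nnnorm, ← ofReal_norm, hnormT]
      rw [lintegral_congr this, lintegral_const, measure_univ, mul_one]
    rw [tsum_congr heq, ← ENNReal.ofReal_tsum_of_nonneg (fun j => (aseq_pos hm2 p j).le)
      (summable_aseq hm2 hp)]
    exact ENNReal.ofReal_ne_top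
  rw [fhat2, integral_congr_ae (Filter.Eventually.of_forall hrw), integral_tsum hmeas hfin]
  have hterm : ∀ j : ℕ, ∫ z, T j z ∂(μ.prod μ)
      = if j = n then ((aseq m p n : ℝ) : ℂ) else 0 := by
    intro j
    have hpm : ∫ z, T j z ∂(μ.prod μ)
        = (∫ x, ((aseq m p j : ℝ) : ℂ) * (rad m j x * (starRingEnd ℂ) (psi m N x)) ∂μ) *
          (∫ y, rad m j y * (starRingEnd ℂ) (psi m N y) ∂μ) :=
      integral_prod_mul (μ := μ) (ν := μ)
        (f := fun x => ((aseq m p j : ℝ) : ℂ) * (rad m j x * (starRingEnd ℂ) (psi m N x)))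
        (g := fun y => rad m j y * (starRingEnd ℂ) (psi m N y))
    rw [hpm, integral_const_mul]
    have horth : ∫ x, rad m j x * (starRingEnd ℂ) (psi m N x) ∂μ
        = if M m j = N then 1 else 0 := orth_rad hm2 μ hμ j N
    rw [horth]
    by_cases hj : j = n
    · subst hj
      rw [if_pos rfl, if_pos rfl]
      simp
    · have : M m j ≠ N := fun hc => hj ((M_strictMono hm2).injective (hN ▸ hc))
      rw [if_neg this, if_neg hj]
      simp
  rw [tsum_congr hterm, tsum_ite_eq]


include hm2 hμ hp in
lemma key_coeff (α β : ℝ) (n : ℕ) :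
    ∫ z, (cesaro2 m μ α β (f0 m p) (M m n) (M m n) z - f0 m p z) *
        ((starRingEnd ℂ) (psi m (M m n) z.1) * (starRingEnd ℂ) (psi m (M m n) z.2)) ∂(μ.prod μ)
      = ((((A (-α) (M m n) * A (-β) (M m n))⁻¹ * aseq m p n - aseq m p n : ℝ)) : ℂ) := by
  set N := M m n with hN
  set φ : G m × G m → ℂ := fun z =>
    (starRingEnd ℂ) (psi m N z.1) * (starRingEnd ℂ) (psi m N z.2) with hφ
  have hcont_φ : Continuous φ :=
    ((continuous_conj_psi N).comp continuous_fst).mul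
      ((continuous_conj_psi N).comp continuous_snd)
  have hint1 : Integrable (fun z => cesaro2 m μ α β (f0 m p) N N z * φ z) (μ.prod μ) :=
    cont_int _ ((continuous_cesaro2 μ α β _ N N).mul hcont_φ)
  have hint2 : Integrable (fun z => f0 m p z * φ z) (μ.prod μ) :=
    cont_int _ ((continuous_f0 hm2 hp).mul hcont_φ)
  have hsplit : ∫ z, (cesaro2 m μ α β (f0 m p) N N z - f0 m p z) * φ z ∂(μ.prod μ)
      = (∫ z, cesaro2 m μ α β (f0 m p) N N z * φ z ∂(μ.prod μ))
        - ∫ z, f0 m p z * φ z ∂(μ.prod μ) := by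
    rw [← integral_sub hint1 hint2]
    apply integral_congr_ae
    filter_upwards with z
    ring
  have hf0 : ∫ z, f0 m p z * φ z ∂(μ.prod μ) = ((aseq m p n : ℝ) : ℂ) := by
    rw [← fhat2_f0 hm2 μ hμ hp n, fhat2]
    apply integral_congr_ae
    filter_upwards with z
    rw [hφ]
    ring
  have hces : ∫ z, cesaro2 m μ α β (f0 m p) N N z * φ z ∂(μ.prod μ)
      = ((A (-α) N * A (-β) N : ℝ) : ℂ)⁻¹ * ((aseq m p n : ℝ) : ℂ) := by
    set K : ℕ → ℕ → ℂ := fun i j => ((A (-α) N * A (-β) N : ℝ) : ℂ)⁻¹ *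
      (((A (-α) (N - i) * A (-β) (N - j) : ℝ) : ℂ) * fhat2 m μ (f0 m p) i j) with hK
    set Ter : ℕ → ℕ → G m × G m → ℂ := fun i j z =>
      K i j * ((psi m i z.1 * (starRingEnd ℂ) (psi m N z.1)) *
        (psi m j z.2 * (starRingEnd ℂ) (psi m N z.2))) with hTer
    have hrep : ∀ z, cesaro2 m μ α β (f0 m p) N N z * φ z
        = ∑ i ∈ range (N + 1), ∑ j ∈ range (N + 1), Ter i j z := by
      intro z
      rw [cesaro2, hφ, hTer]
      simp only [Finset.mul_sum, Finset.sum_mul]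
      refine Finset.sum_congr rfl fun i _ => Finset.sum_congr rfl fun j _ => ?_
      rw [hK]
      ring
    have hint_term : ∀ i j : ℕ, Integrable (Ter i j) (μ.prod μ) := by
      intro i j
      apply cont_int
      rw [hTer]
      exact continuous_const.mul
        (((((continuous_psi i).comp continuous_fst)).mul
          ((continuous_conj_psi N).comp continuous_fst)).mul
        ((((continuous_psi j).comp continuous_snd)).mul
          ((continuous_conj_psi N).comp continuous_snd)))
    rw [integral_congr_ae (Filter.Eventually.of_forall hrep)]
    rw [integral_finset_sum _ (fun i _ => integrable_finset_sum _ (fun j _ => hint_term i j))]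
    rw [Finset.sum_congr rfl fun i _ => integral_finset_sum _ (fun j _ => hint_term i j)]
    have hterm : ∀ i j : ℕ, ∫ z, Ter i j z ∂(μ.prod μ)
        = K i j * ((if i = N then (1 : ℂ) else 0) * (if j = N then (1 : ℂ) else 0)) := by
      intro i j
      have hmul : ∫ z, Ter i j z ∂(μ.prod μ)
          = K i j * ∫ z, ((psi m i z.1 * (starRingEnd ℂ) (psi m N z.1)) *
              (psi m j z.2 * (starRingEnd ℂ) (psi m N z.2))) ∂(μ.prod μ) :=
        integral_const_mul _ _
      have hpm : ∫ z, ((psi m i z.1 * (starRingEnd ℂ) (psi m N z.1)) *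
              (psi m j z.2 * (starRingEnd ℂ) (psi m N z.2))) ∂(μ.prod μ)
          = (∫ x, psi m i x * (starRingEnd ℂ) (psi m N x) ∂μ) *
            (∫ y, psi m j y * (starRingEnd ℂ) (psi m N y) ∂μ) :=
        integral_prod_mul (μ := μ) (ν := μ)
          (f := fun x => psi m i x * (starRingEnd ℂ) (psi m N x))
          (g := fun y => psi m j y * (starRingEnd ℂ) (psi m N y))
      rw [hmul, hpm, orth hm2 μ hμ i N, orth hm2 μ hμ j N]
    rw [Finset.sum_congr rfl fun i _ => Finset.sum_congr rfl fun j _ => hterm i j]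
    have hNmem : N ∈ range (N + 1) := self_mem_range_succ N
    have inner : ∀ i : ℕ, ∑ j ∈ range (N + 1),
        K i j * ((if i = N then (1 : ℂ) else 0) * (if j = N then (1 : ℂ) else 0))
        = (if i = N then (1 : ℂ) else 0) * K i N := by
      intro i
      by_cases hi : i = N
      · simp only [hi, if_true, one_mul]
        have : ∀ j ∈ range (N + 1), K N j * (if j = N then (1 : ℂ) else 0)
            = if j = N then K N j else 0 := by
          intro j _
          split <;> simp
        rw [Finset.sum_congr rfl this, Finset.sum_ite_eq' (range (N + 1)) N (fun j => K N j),
          if_pos hNmem]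
      · simp [hi]
    rw [Finset.sum_congr rfl fun i _ => inner i]
    have : ∀ i ∈ range (N + 1), (if i = N then (1 : ℂ) else 0) * K i N
        = if i = N then K i N else 0 := by
      intro i _
      split <;> simp
    rw [Finset.sum_congr rfl this, Finset.sum_ite_eq' (range (N + 1)) N (fun i => K i N),
      if_pos hNmem]
    simp only [hK]
    rw [Nat.sub_self, A_zero, A_zero]
    rw [fhat2_f0 hm2 μ hμ hp n]
    push_cast
    ring
  rw [hsplit, hces, hf0]
  push_cast
  ring

end Final

theorem statement_3 (m : ℕ → ℕ) (hm2 : ∀ k, 2 ≤ m k) (hmbd : ∃ B, ∀ k, m k ≤ B)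
    (μ : Measure (G m)) [IsProbabilityMeasure μ]
    (hμ : ∀ (n : ℕ) (x : G m), μ {y : G m | ∀ j < n, y j = x j} = (M m n : ℝ≥0∞)⁻¹)
    (α β : ℝ) (hα : α ∈ Set.Ioo (0 : ℝ) 1) (hβ : β ∈ Set.Ioo (0 : ℝ) 1) (hαβ : α + β < 1) :
    ∃ f₀ : G m × G m → ℂ, Continuous f₀ ∧
      (∃ C : ℝ≥0, 0 < C ∧ ∀ n : ℕ, omegaC m f₀ n ≤ C * ((M m n : ℝ≥0∞)⁻¹) ^ (α + β)) ∧
      0 < Filter.limsup (fun n =>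
        eLpNorm (fun z => cesaro2 m μ α β f₀ (M m n) (M m n) z - f₀ z) 1 (μ.prod μ)) atTop := by
  haveI hNZ : ∀ k, NeZero (m k) := fun k => ⟨by have := hm2 k; omega⟩
  obtain ⟨hα1, hα2⟩ := hα
  obtain ⟨hβ1, hβ2⟩ := hβ
  have hp : 0 < α + β := by linarith
  have hr0 : (0 : ℝ) ≤ (2 : ℝ) ^ (-(α + β)) := by positivity
  have hr1 : (2 : ℝ) ^ (-(α + β)) < 1 :=
    Real.rpow_lt_one_of_one_lt_of_neg (by norm_num) (by linarith)
  have hrpos : (0 : ℝ) < 1 - (2 : ℝ) ^ (-(α + β)) := by linarith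
  refine ⟨f0 m (α + β), continuous_f0 hm2 hp,
    ⟨(2 * (1 - (2 : ℝ) ^ (-(α + β)))⁻¹).toNNReal, ?_, ?_⟩, ?_⟩
  · apply Real.toNNReal_pos.mpr
    positivity
  · intro n
    have h := omegaC_f0_le hm2 hp n
    have hC : (((2 * (1 - (2 : ℝ) ^ (-(α + β)))⁻¹).toNNReal : ℝ≥0) : ℝ≥0∞)
        = ENNReal.ofReal (2 * (1 - (2 : ℝ) ^ (-(α + β)))⁻¹) := rfl
    rw [hC]
    exact h
  · have htend : Filter.Tendsto (fun n : ℕ => aseq m (α + β) n) atTop (nhds 0) := by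
      apply squeeze_zero (fun n => (aseq_pos hm2 _ n).le) (fun n => aseq_le_geom hm2 hp n)
      exact tendsto_pow_atTop_nhds_zero_of_lt_one hr0 hr1
    have hev : ∀ᶠ n : ℕ in atTop, aseq m (α + β) n ≤ 1 / 2 :=
      (htend.eventually_lt_const (show (0 : ℝ) < 1 / 2 by norm_num)).mono fun n hn => hn.le
    have hmain : ∀ᶠ n : ℕ in atTop, ENNReal.ofReal (1 / 2) ≤
        eLpNorm (fun z => cesaro2 m μ α β (f0 m (α + β)) (M m n) (M m n) z - f0 m (α + β) z)
          1 (μ.prod μ) := by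
      filter_upwards [hev] with n han
      set N := M m n with hN
      set g : G m × G m → ℂ := fun z => cesaro2 m μ α β (f0 m (α + β)) N N z - f0 m (α + β) z
        with hg
      set φ : G m × G m → ℂ := fun z =>
        (starRingEnd ℂ) (psi m N z.1) * (starRingEnd ℂ) (psi m N z.2) with hφ
      have hval := key_coeff hm2 μ hμ hp α β n
      set v : ℝ := (A (-α) N * A (-β) N)⁻¹ * aseq m (α + β) n - aseq m (α + β) n with hv
      have hNpos : 1 ≤ N := M_pos hm2 n
      have hN1 : (0 : ℝ) < (N : ℝ) := by exact_mod_cast M_pos hm2 n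
      have hNinv : (0 : ℝ) < ((N : ℝ))⁻¹ := by positivity
      have hAa : A (-α) N * A (-β) N ≤ aseq m (α + β) n := by
        have h1 := A_le hα1 hα2 (n := N) hNpos
        have h2 := A_le hβ1 hβ2 (n := N) hNpos
        have hA2p := A_pos (α := β) hβ2 N
        calc A (-α) N * A (-β) N ≤ ((N : ℝ))⁻¹ ^ α * ((N : ℝ))⁻¹ ^ β :=
          mul_le_mul h1 h2 hA2p.le (Real.rpow_nonneg hNinv.le α)
        _ = ((N : ℝ))⁻¹ ^ (α + β) := (Real.rpow_add hNinv α β).symm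
        _ = aseq m (α + β) n := by rw [aseq, hN]
      have hApos : 0 < A (-α) N * A (-β) N := mul_pos (A_pos hα2 N) (A_pos hβ2 N)
      have hapos := aseq_pos hm2 (α + β) n
      have hvge : (1 : ℝ) / 2 ≤ v := by
        have h3 : (1 : ℝ) ≤ (A (-α) N * A (-β) N)⁻¹ * aseq m (α + β) n := by
          rw [← div_eq_inv_mul, le_div_iff₀ hApos]
          linarith
        rw [hv]
        linarith
      by_cases htop : ∫⁻ z, (‖g z‖₊ : ℝ≥0∞) ∂(μ.prod μ) = ⊤
      · simp only [eLpNorm_one_eq_lintegral_enorm, enorm_eq_nnnorm]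
        rw [htop]
        exact le_top
      · have hφn : ∀ z, ‖g z * φ z‖ = ‖g z‖ := by
          intro z
          rw [norm_mul, hφ]
          simp only [norm_mul, RCLike.norm_conj, norm_psi hm2]
          ring
        have h1 : ‖∫ z, g z * φ z ∂(μ.prod μ)‖
            ≤ (∫⁻ z, ENNReal.ofReal ‖g z * φ z‖ ∂(μ.prod μ)).toReal :=
          norm_integral_le_lintegral_norm _
        have h2 : ∫⁻ z, ENNReal.ofReal ‖g z * φ z‖ ∂(μ.prod μ)
            = ∫⁻ z, (‖g z‖₊ : ℝ≥0∞) ∂(μ.prod μ) :=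
          lintegral_congr fun z => by rw [hφn z, ofReal_norm, enorm_eq_nnnorm]
        have h3 : ∫ z, g z * φ z ∂(μ.prod μ) = ((v : ℝ) : ℂ) := hval
        have h4 : (1 : ℝ) / 2 ≤ ‖∫ z, g z * φ z ∂(μ.prod μ)‖ := by
          rw [h3, Complex.norm_real, Real.norm_eq_abs]
          exact le_trans hvge (le_abs_self v)
        simp only [eLpNorm_one_eq_lintegral_enorm, enorm_eq_nnnorm]
        calc ENNReal.ofReal (1 / 2) ≤ ENNReal.ofReal ‖∫ z, g z * φ z ∂(μ.prod μ)‖ :=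
          ENNReal.ofReal_le_ofReal h4
        _ ≤ ENNReal.ofReal ((∫⁻ z, (‖g z‖₊ : ℝ≥0∞) ∂(μ.prod μ)).toReal) :=
          ENNReal.ofReal_le_ofReal (by rw [← h2]; exact h1)
        _ = ∫⁻ z, (‖g z‖₊ : ℝ≥0∞) ∂(μ.prod μ) := ENNReal.ofReal_toReal htop
    have hbound : Filter.IsBoundedUnder (· ≤ ·) atTop (fun n =>
        eLpNorm (fun z => cesaro2 m μ α β (f0 m (α + β)) (M m n) (M m n) z - f0 m (α + β) z)
          1 (μ.prod μ)) := Filter.isBoundedUnder_of ⟨⊤, fun _ => le_top⟩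
    have hls := Filter.le_limsup_of_frequently_le hmain.frequently hbound
    calc (0 : ℝ≥0∞) < ENNReal.ofReal (1 / 2) := by rw [ENNReal.ofReal_pos]; norm_num
    _ ≤ _ := hls

end Vilenkin
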